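/- Let c > 0 and define φ(r,s) := c·√(r² + 4r(r² − s²)) / ( r·(1 + 4r) ) on {(r,s) ∈ ℝ² : 0 < s < r}. With Q := (1/(2r))(r·φ_ss − φ_r + s·φ_rs)/(φ − s·φ_s + (r² − s²)·φ_ss), P := (r·φ_s + s·φ_r)/(2rφ) − (Q/φ)(s·φ + (r² − s²)·φ_s), R₁ := P² − (1/r)(s·P_r + r·P_s) + 2Q(1 + s·P + (r² − s²)·P_s), R₂ := 2Q(2Q − s·Q_s) + (1/r)(2Q_r − s·Q_rs − r·Q_ss) + (r² − s²)(2Q·Q_ss − Q_s²) and R₃ := (1/r)( (2(r² − s²)Q − 1)·r·P_ss − s·P_rs + P_r + 2rQ·(P − s·P_s) ), one has R₂ = 0, R₃ = 0 and R₁ = −(4/c²)·φ² identically on this domain. -/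

import Mathlib

/-- Partial derivative with respect to the first variable `r`. -/
noncomputable def pderivR (f : ℝ → ℝ → ℝ) (r s : ℝ) : ℝ := deriv (fun t => f t s) r

/-- Partial derivative with respect to the second variable `s`. -/
noncomputable def pderivS (f : ℝ → ℝ → ℝ) (r s : ℝ) : ℝ := deriv (fun t => f r t) s

/-- Geodesic coefficient `Q := (1/(2r))·(rφ_ss − φ_r + sφ_rs)/(φ − sφ_s + (r² − s²)φ_ss)`. -/
noncomputable def Qc (φ : ℝ → ℝ → ℝ) (r s : ℝ) : ℝ :=
  (1 / (2 * r)) *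
    ((r * pderivS (pderivS φ) r s - pderivR φ r s + s * pderivR (pderivS φ) r s) /
      (φ r s - s * pderivS φ r s + (r ^ 2 - s ^ 2) * pderivS (pderivS φ) r s))

/-- Geodesic coefficient `P := (rφ_s + sφ_r)/(2rφ) − (Q/φ)·(sφ + (r² − s²)φ_s)`. -/
noncomputable def Pc (φ : ℝ → ℝ → ℝ) (r s : ℝ) : ℝ :=
  (r * pderivS φ r s + s * pderivR φ r s) / (2 * r * φ r s)
    - (Qc φ r s / φ r s) * (s * φ r s + (r ^ 2 - s ^ 2) * pderivS φ r s)

/-- `R₁ := P² − (1/r)(sP_r + rP_s) + 2Q(1 + sP + (r² − s²)P_s)`. -/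
noncomputable def R1 (P Q : ℝ → ℝ → ℝ) (r s : ℝ) : ℝ :=
  (P r s) ^ 2 - (1 / r) * (s * pderivR P r s + r * pderivS P r s)
    + 2 * Q r s * (1 + s * P r s + (r ^ 2 - s ^ 2) * pderivS P r s)

/-- `R₂ := 2Q(2Q − sQ_s) + (1/r)(2Q_r − sQ_rs − rQ_ss) + (r² − s²)(2Q·Q_ss − Q_s²)`. -/
noncomputable def R2 (Q : ℝ → ℝ → ℝ) (r s : ℝ) : ℝ :=
  2 * Q r s * (2 * Q r s - s * pderivS Q r s)
    + (1 / r) * (2 * pderivR Q r s - s * pderivR (pderivS Q) r s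
        - r * pderivS (pderivS Q) r s)
    + (r ^ 2 - s ^ 2) * (2 * Q r s * pderivS (pderivS Q) r s - (pderivS Q r s) ^ 2)

/-- `R₃ := (1/r)((2(r² − s²)Q − 1)·r·P_ss − s·P_rs + P_r + 2rQ(P − sP_s))`. -/
noncomputable def R3 (P Q : ℝ → ℝ → ℝ) (r s : ℝ) : ℝ :=
  (1 / r) * ((2 * (r ^ 2 - s ^ 2) * Q r s - 1) * r * pderivS (pderivS P) r s
    - s * pderivR (pderivS P) r s + pderivR P r s
    + 2 * r * Q r s * (P r s - s * pderivS P r s))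

/-- Example 9: `φ(r,s) := c·√(r² + 4r(r² − s²))/(r(1 + 4r))`. -/
noncomputable def φ16 (c r s : ℝ) : ℝ :=
  c * Real.sqrt (r ^ 2 + 4 * r * (r ^ 2 - s ^ 2)) / (r * (1 + 4 * r))
open Real Filter Set

namespace Stmt16Aux

private lemma Apos {r s : ℝ} (hs : 0 < s) (hsr : s < r) :
    0 < r ^ 2 + 4 * r * (r ^ 2 - s ^ 2) := by
  nlinarith [mul_pos (sub_pos.2 hsr) (show (0:ℝ) < r + s by linarith), mul_pos hs (hs.trans hsr)]

private lemma hA_s (r s : ℝ) :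
    HasDerivAt (fun t : ℝ => r ^ 2 + 4 * r * (r ^ 2 - t ^ 2)) (-(8 * r * s)) s := by
  have h : HasDerivAt (fun t : ℝ => r ^ 2 - t ^ 2) (-(2 * s)) s := by
    simpa using (hasDerivAt_pow 2 s).const_sub (r ^ 2)
  have h2 := (h.const_mul (4 * r)).const_add (r ^ 2)
  refine h2.congr_deriv ?_; ring

private lemma hA_r (r s : ℝ) :
    HasDerivAt (fun t : ℝ => t ^ 2 + 4 * t * (t ^ 2 - s ^ 2)) (2*r + 12*r^2 - 4*s^2) r := by
  have h1 : HasDerivAt (fun t : ℝ => 4 * t) 4 r := by simpa using (hasDerivAt_id r).const_mul (4:ℝ)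
  have h2 : HasDerivAt (fun t : ℝ => t ^ 2 - s ^ 2) (2 * r) r := by
    simpa using (hasDerivAt_pow 2 r).sub_const (s ^ 2)
  have h3 := (hasDerivAt_pow 2 r).add (h1.mul h2)
  refine h3.congr_deriv ?_; push_cast; ring

private lemma hlin (r : ℝ) : HasDerivAt (fun t : ℝ => 1 + 4 * t) 4 r := by
  simpa using (((hasDerivAt_id r).const_mul (4:ℝ)).const_add (1:ℝ))

private lemma hD_r (r : ℝ) :
    HasDerivAt (fun t : ℝ => t * (1 + 4 * t)) (1 * (1 + 4 * r) + r * 4) r :=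
  (hasDerivAt_id r).mul (hlin r)

private lemma phiS_eq (c : ℝ) {r s : ℝ} (hs : 0 < s) (hsr : s < r) :
    pderivS (φ16 c) r s
      = -(4 * c * s) * Real.sqrt (r ^ 2 + 4 * r * (r ^ 2 - s ^ 2))
          / ((r ^ 2 + 4 * r * (r ^ 2 - s ^ 2)) * (1 + 4 * r)) := by
  have hA := Apos hs hsr
  have hr : 0 < r := hs.trans hsr
  have hu : 0 < Real.sqrt (r ^ 2 + 4 * r * (r ^ 2 - s ^ 2)) := Real.sqrt_pos.2 hA
  have hA2 : Real.sqrt (r ^ 2 + 4 * r * (r ^ 2 - s ^ 2)) ^ 2 = r ^ 2 + 4 * r * (r ^ 2 - s ^ 2) :=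
    Real.sq_sqrt hA.le
  have h := (((hA_s r s).sqrt hA.ne').const_mul c).div_const (r * (1 + 4 * r))
  have hfun : (fun t : ℝ => φ16 c r t)
      = fun t => c * Real.sqrt (r ^ 2 + 4 * r * (r ^ 2 - t ^ 2)) / (r * (1 + 4 * r)) := rfl
  have h14 : (0:ℝ) < 1 + 4 * r := by linarith
  rw [pderivS, hfun, h.deriv]
  have hB : r + 4 * (r ^ 2 - s ^ 2) ≠ 0 :=
    (show 0 < r + 4 * (r ^ 2 - s ^ 2) by nlinarith [mul_pos (sub_pos.2 hsr) (show (0:ℝ) < r + s by linarith)]).ne'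
  generalize Real.sqrt (r ^ 2 + 4 * r * (r ^ 2 - s ^ 2)) = u at hu hA2 ⊢
  field_simp
  rw [hA2]
  ring

private lemma phiR_eq (c : ℝ) {r s : ℝ} (hs : 0 < s) (hsr : s < r) :
    pderivR (φ16 c) r s
      = 2 * c * (s^2 - r^2 + 4*r*(3*s^2 - r^2)) * Real.sqrt (r ^ 2 + 4 * r * (r ^ 2 - s ^ 2))
          / ((r ^ 2 + 4 * r * (r ^ 2 - s ^ 2)) * (r * (1 + 4 * r)^2)) := by
  have hA := Apos hs hsr
  have hr : 0 < r := hs.trans hsr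
  have hu : 0 < Real.sqrt (r ^ 2 + 4 * r * (r ^ 2 - s ^ 2)) := Real.sqrt_pos.2 hA
  have hA2 : Real.sqrt (r ^ 2 + 4 * r * (r ^ 2 - s ^ 2)) ^ 2 = r ^ 2 + 4 * r * (r ^ 2 - s ^ 2) :=
    Real.sq_sqrt hA.le
  have h14 : (0:ℝ) < 1 + 4 * r := by linarith
  have hd0 : r * (1 + 4 * r) ≠ 0 := (mul_pos hr h14).ne'
  have h := (((hA_r r s).sqrt hA.ne').const_mul c).div (hD_r r) hd0
  have hfun : (fun t : ℝ => φ16 c t s)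
      = fun t => c * Real.sqrt (t ^ 2 + 4 * t * (t ^ 2 - s ^ 2)) / (t * (1 + 4 * t)) := rfl
  rw [pderivR, hfun]
  erw [h.deriv]
  have hB : r + 4 * (r ^ 2 - s ^ 2) ≠ 0 :=
    (show 0 < r + 4 * (r ^ 2 - s ^ 2) by nlinarith [mul_pos (sub_pos.2 hsr) (show (0:ℝ) < r + s by linarith)]).ne'
  generalize Real.sqrt (r ^ 2 + 4 * r * (r ^ 2 - s ^ 2)) = u at hu hA2 ⊢
  field_simp
  rw [hA2]
  ring

private lemma phiSS_eq (c : ℝ) {r s : ℝ} (hs : 0 < s) (hsr : s < r) :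
    pderivS (pderivS (φ16 c)) r s
      = -(4 * c * r^2) * Real.sqrt (r ^ 2 + 4 * r * (r ^ 2 - s ^ 2))
          / (r ^ 2 + 4 * r * (r ^ 2 - s ^ 2))^2 := by
  have hA := Apos hs hsr
  have hr : 0 < r := hs.trans hsr
  have hu : 0 < Real.sqrt (r ^ 2 + 4 * r * (r ^ 2 - s ^ 2)) := Real.sqrt_pos.2 hA
  have hA2 : Real.sqrt (r ^ 2 + 4 * r * (r ^ 2 - s ^ 2)) ^ 2 = r ^ 2 + 4 * r * (r ^ 2 - s ^ 2) :=
    Real.sq_sqrt hA.le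
  have h14 : (0:ℝ) < 1 + 4 * r := by linarith
  have hev : (fun t => pderivS (φ16 c) r t)
      =ᶠ[nhds s] fun t => -(4 * c * t) * Real.sqrt (r ^ 2 + 4 * r * (r ^ 2 - t ^ 2))
          / ((r ^ 2 + 4 * r * (r ^ 2 - t ^ 2)) * (1 + 4 * r)) := by
    filter_upwards [Ioo_mem_nhds hs hsr] with t ht
    exact phiS_eq c ht.1 ht.2
  rw [pderivS, hev.deriv_eq]
  have hnum : HasDerivAt (fun t : ℝ => -(4 * c * t) * Real.sqrt (r ^ 2 + 4 * r * (r ^ 2 - t ^ 2)))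
      (-(4 * c * 1) * Real.sqrt (r ^ 2 + 4 * r * (r ^ 2 - s ^ 2))
        + -(4 * c * s) * (-(8 * r * s) / (2 * Real.sqrt (r ^ 2 + 4 * r * (r ^ 2 - s ^ 2))))) s := by
    have hn : HasDerivAt (fun t : ℝ => -(4 * c * t)) (-(4 * c * 1)) s :=
      (((hasDerivAt_id s).const_mul (4 * c))).neg
    exact hn.mul ((hA_s r s).sqrt hA.ne')
  have hden : HasDerivAt (fun t : ℝ => (r ^ 2 + 4 * r * (r ^ 2 - t ^ 2)) * (1 + 4 * r))
      (-(8 * r * s) * (1 + 4 * r)) s := (hA_s r s).mul_const (1 + 4 * r)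
  have h := hnum.div hden (by positivity)
  erw [h.deriv]
  have hB : r + 4 * (r ^ 2 - s ^ 2) ≠ 0 :=
    (show 0 < r + 4 * (r ^ 2 - s ^ 2) by nlinarith [mul_pos (sub_pos.2 hsr) (show (0:ℝ) < r + s by linarith)]).ne'
  generalize Real.sqrt (r ^ 2 + 4 * r * (r ^ 2 - s ^ 2)) = u at hu hA2 ⊢
  field_simp
  rw [hA2]
  ring

private lemma phiRS_eq (c : ℝ) {r s : ℝ} (hs : 0 < s) (hsr : s < r) :
    pderivR (pderivS (φ16 c)) r s
      = 4 * c * s * (r + 14*r^2 + 40*r^3 - 2*s^2 - 24*r*s^2)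
          * Real.sqrt (r ^ 2 + 4 * r * (r ^ 2 - s ^ 2))
          / ((r ^ 2 + 4 * r * (r ^ 2 - s ^ 2))^2 * (1 + 4 * r)^2) := by
  have hA := Apos hs hsr
  have hr : 0 < r := hs.trans hsr
  have hu : 0 < Real.sqrt (r ^ 2 + 4 * r * (r ^ 2 - s ^ 2)) := Real.sqrt_pos.2 hA
  have hA2 : Real.sqrt (r ^ 2 + 4 * r * (r ^ 2 - s ^ 2)) ^ 2 = r ^ 2 + 4 * r * (r ^ 2 - s ^ 2) :=
    Real.sq_sqrt hA.le
  have h14 : (0:ℝ) < 1 + 4 * r := by linarith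
  have hev : (fun t => pderivS (φ16 c) t s)
      =ᶠ[nhds r] fun t => -(4 * c * s) * Real.sqrt (t ^ 2 + 4 * t * (t ^ 2 - s ^ 2))
          / ((t ^ 2 + 4 * t * (t ^ 2 - s ^ 2)) * (1 + 4 * t)) := by
    filter_upwards [Ioi_mem_nhds hsr] with t ht
    exact phiS_eq c hs ht
  rw [pderivR, hev.deriv_eq]
  have hnum : HasDerivAt (fun t : ℝ => -(4 * c * s) * Real.sqrt (t ^ 2 + 4 * t * (t ^ 2 - s ^ 2)))
      (-(4 * c * s) * ((2*r + 12*r^2 - 4*s^2) / (2 * Real.sqrt (r ^ 2 + 4 * r * (r ^ 2 - s ^ 2))))) r :=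
    ((hA_r r s).sqrt hA.ne').const_mul (-(4 * c * s))
  have hden : HasDerivAt (fun t : ℝ => (t ^ 2 + 4 * t * (t ^ 2 - s ^ 2)) * (1 + 4 * t))
      ((2*r + 12*r^2 - 4*s^2) * (1 + 4 * r) + (r ^ 2 + 4 * r * (r ^ 2 - s ^ 2)) * 4) r :=
    (hA_r r s).mul (hlin r)
  have h := hnum.div hden (by positivity)
  erw [h.deriv]
  have hB : r + 4 * (r ^ 2 - s ^ 2) ≠ 0 :=
    (show 0 < r + 4 * (r ^ 2 - s ^ 2) by nlinarith [mul_pos (sub_pos.2 hsr) (show (0:ℝ) < r + s by linarith)]).ne'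
  generalize Real.sqrt (r ^ 2 + 4 * r * (r ^ 2 - s ^ 2)) = u at hu hA2 ⊢
  field_simp
  rw [hA2]
  ring

private lemma phi_pos (c : ℝ) (hc : 0 < c) {r s : ℝ} (hs : 0 < s) (hsr : s < r) :
    0 < φ16 c r s := by
  have hA := Apos hs hsr
  have hr : 0 < r := hs.trans hsr
  have hu : 0 < Real.sqrt (r ^ 2 + 4 * r * (r ^ 2 - s ^ 2)) := Real.sqrt_pos.2 hA
  have h14 : (0:ℝ) < 1 + 4 * r := by linarith
  exact div_pos (mul_pos hc hu) (mul_pos hr h14)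

private lemma Tval (c : ℝ) (hc : 0 < c) {r s : ℝ} (hs : 0 < s) (hsr : s < r) :
    φ16 c r s - s * pderivS (φ16 c) r s
        + (r ^ 2 - s ^ 2) * pderivS (pderivS (φ16 c)) r s
      = c * r^3 * Real.sqrt (r ^ 2 + 4 * r * (r ^ 2 - s ^ 2))
          / (r ^ 2 + 4 * r * (r ^ 2 - s ^ 2))^2 := by
  have hA := Apos hs hsr
  have hr : 0 < r := hs.trans hsr
  have hu : 0 < Real.sqrt (r ^ 2 + 4 * r * (r ^ 2 - s ^ 2)) := Real.sqrt_pos.2 hA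
  have hA2 : Real.sqrt (r ^ 2 + 4 * r * (r ^ 2 - s ^ 2)) ^ 2 = r ^ 2 + 4 * r * (r ^ 2 - s ^ 2) :=
    Real.sq_sqrt hA.le
  have h14 : (0:ℝ) < 1 + 4 * r := by linarith
  have hphi : φ16 c r s = c * Real.sqrt (r ^ 2 + 4 * r * (r ^ 2 - s ^ 2)) / (r * (1 + 4 * r)) := rfl
  rw [phiS_eq c hs hsr, phiSS_eq c hs hsr, hphi]
  have hB : r + 4 * (r ^ 2 - s ^ 2) ≠ 0 :=
    (show 0 < r + 4 * (r ^ 2 - s ^ 2) by nlinarith [mul_pos (sub_pos.2 hsr) (show (0:ℝ) < r + s by linarith)]).ne'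
  generalize Real.sqrt (r ^ 2 + 4 * r * (r ^ 2 - s ^ 2)) = u at hu hA2 ⊢
  field_simp
  linear_combination (0) * hA2

private lemma Qval (c : ℝ) (hc : 0 < c) {r s : ℝ} (hs : 0 < s) (hsr : s < r) :
    Qc (φ16 c) r s = (s^2 - r^2) / r^3 := by
  have hA := Apos hs hsr
  have hr : 0 < r := hs.trans hsr
  have hu : 0 < Real.sqrt (r ^ 2 + 4 * r * (r ^ 2 - s ^ 2)) := Real.sqrt_pos.2 hA
  have hA2 : Real.sqrt (r ^ 2 + 4 * r * (r ^ 2 - s ^ 2)) ^ 2 = r ^ 2 + 4 * r * (r ^ 2 - s ^ 2) :=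
    Real.sq_sqrt hA.le
  have h14 : (0:ℝ) < 1 + 4 * r := by linarith
  rw [Qc, Tval c hc hs hsr, phiR_eq c hs hsr, phiSS_eq c hs hsr, phiRS_eq c hs hsr]
  have hB : r + 4 * (r ^ 2 - s ^ 2) ≠ 0 :=
    (show 0 < r + 4 * (r ^ 2 - s ^ 2) by nlinarith [mul_pos (sub_pos.2 hsr) (show (0:ℝ) < r + s by linarith)]).ne'
  generalize Real.sqrt (r ^ 2 + 4 * r * (r ^ 2 - s ^ 2)) = u at hu hA2 ⊢
  field_simp
  linear_combination (0) * hA2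

private lemma Pval (c : ℝ) (hc : 0 < c) {r s : ℝ} (hs : 0 < s) (hsr : s < r) :
    Pc (φ16 c) r s = -(2 * s) / (r * (1 + 4 * r)) := by
  have hA := Apos hs hsr
  have hr : 0 < r := hs.trans hsr
  have hu : 0 < Real.sqrt (r ^ 2 + 4 * r * (r ^ 2 - s ^ 2)) := Real.sqrt_pos.2 hA
  have hA2 : Real.sqrt (r ^ 2 + 4 * r * (r ^ 2 - s ^ 2)) ^ 2 = r ^ 2 + 4 * r * (r ^ 2 - s ^ 2) :=
    Real.sq_sqrt hA.le
  have h14 : (0:ℝ) < 1 + 4 * r := by linarith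
  have hphi : φ16 c r s = c * Real.sqrt (r ^ 2 + 4 * r * (r ^ 2 - s ^ 2)) / (r * (1 + 4 * r)) := rfl
  rw [Pc, Qval c hc hs hsr, phiS_eq c hs hsr, phiR_eq c hs hsr, hphi]
  have hB : r + 4 * (r ^ 2 - s ^ 2) ≠ 0 :=
    (show 0 < r + 4 * (r ^ 2 - s ^ 2) by nlinarith [mul_pos (sub_pos.2 hsr) (show (0:ℝ) < r + s by linarith)]).ne'
  generalize Real.sqrt (r ^ 2 + 4 * r * (r ^ 2 - s ^ 2)) = u at hu hA2 ⊢
  field_simp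
  linear_combination (0) * hA2


private lemma QS_eq (c : ℝ) (hc : 0 < c) {r s : ℝ} (hs : 0 < s) (hsr : s < r) :
    pderivS (Qc (φ16 c)) r s = 2 * s / r^3 := by
  have hr : 0 < r := hs.trans hsr
  have hev : (fun t => Qc (φ16 c) r t) =ᶠ[nhds s] fun t => (t^2 - r^2) / r^3 := by
    filter_upwards [Ioo_mem_nhds hs hsr] with t ht
    exact Qval c hc ht.1 ht.2
  rw [pderivS, hev.deriv_eq]
  have h := ((hasDerivAt_pow 2 s).sub_const (r^2)).div_const (r^3)
  rw [h.deriv]; push_cast; ring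

private lemma QR_eq (c : ℝ) (hc : 0 < c) {r s : ℝ} (hs : 0 < s) (hsr : s < r) :
    pderivR (Qc (φ16 c)) r s = 1 / r^2 - 3 * s^2 / r^4 := by
  have hr : 0 < r := hs.trans hsr
  have hev : (fun t => Qc (φ16 c) t s) =ᶠ[nhds r] fun t => (s^2 - t^2) / t^3 := by
    filter_upwards [Ioi_mem_nhds hsr] with t ht
    exact Qval c hc hs ht
  rw [pderivR, hev.deriv_eq]
  have hnum : HasDerivAt (fun t : ℝ => s^2 - t^2) (-(2*r)) r := by
    simpa using (hasDerivAt_pow 2 r).const_sub (s^2)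
  have h := hnum.div (hasDerivAt_pow 3 r) (pow_ne_zero 3 hr.ne')
  erw [h.deriv]
  field_simp
  ring

private lemma QSS_eq (c : ℝ) (hc : 0 < c) {r s : ℝ} (hs : 0 < s) (hsr : s < r) :
    pderivS (pderivS (Qc (φ16 c))) r s = 2 / r^3 := by
  have hr : 0 < r := hs.trans hsr
  have hev : (fun t => pderivS (Qc (φ16 c)) r t) =ᶠ[nhds s] fun t => 2 * t / r^3 := by
    filter_upwards [Ioo_mem_nhds hs hsr] with t ht
    exact QS_eq c hc ht.1 ht.2
  rw [pderivS, hev.deriv_eq]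
  have h : HasDerivAt (fun t : ℝ => 2 * t / r^3) (2 * 1 / r^3) s := by
    simpa using (((hasDerivAt_id s).const_mul (2:ℝ))).div_const (r^3)
  rw [h.deriv]; ring

private lemma QRS_eq (c : ℝ) (hc : 0 < c) {r s : ℝ} (hs : 0 < s) (hsr : s < r) :
    pderivR (pderivS (Qc (φ16 c))) r s = -(6 * s) / r^4 := by
  have hr : 0 < r := hs.trans hsr
  have hev : (fun t => pderivS (Qc (φ16 c)) t s) =ᶠ[nhds r] fun t => 2 * s / t^3 := by
    filter_upwards [Ioi_mem_nhds hsr] with t ht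
    exact QS_eq c hc hs ht
  rw [pderivR, hev.deriv_eq]
  have h := (hasDerivAt_const r (2*s)).div (hasDerivAt_pow 3 r) (pow_ne_zero 3 hr.ne')
  erw [h.deriv]
  field_simp
  ring

private lemma PS_eq (c : ℝ) (hc : 0 < c) {r s : ℝ} (hs : 0 < s) (hsr : s < r) :
    pderivS (Pc (φ16 c)) r s = -2 / (r * (1 + 4 * r)) := by
  have hr : 0 < r := hs.trans hsr
  have hev : (fun t => Pc (φ16 c) r t) =ᶠ[nhds s] fun t => -(2 * t) / (r * (1 + 4 * r)) := by
    filter_upwards [Ioo_mem_nhds hs hsr] with t ht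
    exact Pval c hc ht.1 ht.2
  rw [pderivS, hev.deriv_eq]
  have h : HasDerivAt (fun t : ℝ => -(2 * t) / (r * (1 + 4 * r))) (-(2 * 1) / (r * (1 + 4 * r))) s := by
    simpa using (((hasDerivAt_id s).const_mul (2:ℝ)).neg).div_const (r * (1 + 4 * r))
  rw [h.deriv]; ring

private lemma PR_eq (c : ℝ) (hc : 0 < c) {r s : ℝ} (hs : 0 < s) (hsr : s < r) :
    pderivR (Pc (φ16 c)) r s = 2 * s * (1 + 8 * r) / (r * (1 + 4 * r))^2 := by
  have hr : 0 < r := hs.trans hsr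
  have h14 : (0:ℝ) < 1 + 4 * r := by linarith
  have hev : (fun t => Pc (φ16 c) t s) =ᶠ[nhds r] fun t => -(2 * s) / (t * (1 + 4 * t)) := by
    filter_upwards [Ioi_mem_nhds hsr] with t ht
    exact Pval c hc hs ht
  rw [pderivR, hev.deriv_eq]
  have h := (hasDerivAt_const r (-(2*s))).div (hD_r r) (mul_pos hr h14).ne'
  erw [h.deriv]
  field_simp
  ring

private lemma PSS_eq (c : ℝ) (hc : 0 < c) {r s : ℝ} (hs : 0 < s) (hsr : s < r) :
    pderivS (pderivS (Pc (φ16 c))) r s = 0 := by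
  have hev : (fun t => pderivS (Pc (φ16 c)) r t) =ᶠ[nhds s]
      fun _ => -2 / (r * (1 + 4 * r)) := by
    filter_upwards [Ioo_mem_nhds hs hsr] with t ht
    exact PS_eq c hc ht.1 ht.2
  rw [pderivS, hev.deriv_eq, deriv_const]

private lemma PRS_eq (c : ℝ) (hc : 0 < c) {r s : ℝ} (hs : 0 < s) (hsr : s < r) :
    pderivR (pderivS (Pc (φ16 c))) r s = 2 * (1 + 8 * r) / (r * (1 + 4 * r))^2 := by
  have hr : 0 < r := hs.trans hsr
  have h14 : (0:ℝ) < 1 + 4 * r := by linarith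
  have hev : (fun t => pderivS (Pc (φ16 c)) t s) =ᶠ[nhds r]
      fun t => -2 / (t * (1 + 4 * t)) := by
    filter_upwards [Ioi_mem_nhds hsr] with t ht
    exact PS_eq c hc hs ht
  rw [pderivR, hev.deriv_eq]
  have h := (hasDerivAt_const r (-2:ℝ)).div (hD_r r) (mul_pos hr h14).ne'
  erw [h.deriv]
  field_simp
  ring

end Stmt16Aux

open Stmt16Aux in
/-- Example 9: `φ16` has `R₂ = 0`, `R₃ = 0` and `R₁ = −(4/c²)·φ²`, i.e. it gives
a Douglas metric of constant flag curvature `K = −4/c²`. -/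
theorem stmt_16 (c : ℝ) (hc : 0 < c) :
    ∀ r s : ℝ, 0 < s → s < r →
      R2 (Qc (φ16 c)) r s = 0
      ∧ R3 (Pc (φ16 c)) (Qc (φ16 c)) r s = 0
      ∧ R1 (Pc (φ16 c)) (Qc (φ16 c)) r s = -(4 / c ^ 2) * (φ16 c r s) ^ 2 := by
  intro r s hs hsr
  have hA := Apos hs hsr
  have hr : 0 < r := hs.trans hsr
  have h14 : (0:ℝ) < 1 + 4 * r := by linarith
  have hA2 : Real.sqrt (r ^ 2 + 4 * r * (r ^ 2 - s ^ 2)) ^ 2 = r ^ 2 + 4 * r * (r ^ 2 - s ^ 2) :=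
    Real.sq_sqrt hA.le
  have hphisq : (φ16 c r s) ^ 2
      = c ^ 2 * (r ^ 2 + 4 * r * (r ^ 2 - s ^ 2)) / (r * (1 + 4 * r)) ^ 2 := by
    have : φ16 c r s = c * Real.sqrt (r ^ 2 + 4 * r * (r ^ 2 - s ^ 2)) / (r * (1 + 4 * r)) := rfl
    rw [this, div_pow, mul_pow, hA2]
  refine ⟨?_, ?_, ?_⟩
  · rw [R2, Qval c hc hs hsr, QS_eq c hc hs hsr, QR_eq c hc hs hsr, QRS_eq c hc hs hsr,
      QSS_eq c hc hs hsr]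
    field_simp
    ring
  · rw [R3, Qval c hc hs hsr, Pval c hc hs hsr, PS_eq c hc hs hsr, PR_eq c hc hs hsr,
      PRS_eq c hc hs hsr, PSS_eq c hc hs hsr]
    field_simp
    ring
  · rw [R1, Qval c hc hs hsr, Pval c hc hs hsr, PS_eq c hc hs hsr, PR_eq c hc hs hsr, hphisq]
    field_simp
    ring
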